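/- Let G be a finite group with |G| ≥ 2, c0, m positive integers, and b_x ≥ 0. Let x_1, …, x_m : Fin c0 → G → ℝ be inputs with ‖x_i‖ ≤ b_x for all i, and for g∈G write (g·x)(i, h) = x(i, g⁻¹h). For l : Fin m → G let A_l be the m×m Gram matrix (A_l)_{i,i'} = ⟨ l_i·x_i , l_{i'}·x_{i'} ⟩, and set M := max over all l : Fin m → G of the spectral (ℓ2→ℓ2 operator) norm ‖A_l‖. Then E_ε max_{l : Fin m → G} ‖ Σ_{i=1}^m ε_i · (l_i·x_i) ‖² ≤ 8·m·log|G|·M + m·b_x² + m·√(8·log|G|·M·b_x²), where the norm is the Euclidean norm on ℝ^{c0·|G|} and E_ε denotes the uniform average over sign vectors ε ∈ {-1,1}^m. -/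

import Mathlib

open Finset

/-- Spectral (ℓ2→ℓ2 operator) norm of a real square matrix. -/
noncomputable def specNorm {m : ℕ} (A : Matrix (Fin m) (Fin m) ℝ) : ℝ :=
  ‖Matrix.toEuclideanCLM (𝕜 := ℝ) A‖

lemma specNorm_nonneg {m : ℕ} (A : Matrix (Fin m) (Fin m) ℝ) : 0 ≤ specNorm A :=
  norm_nonneg _

lemma quad_form_le {m : ℕ} (A : Matrix (Fin m) (Fin m) ℝ) (v : Fin m → ℝ) :
    ∑ i : Fin m, ∑ j : Fin m, v i * (A i j * v j) ≤ specNorm A * ∑ i : Fin m, v i ^ 2 := by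
  set v' : EuclideanSpace ℝ (Fin m) := (WithLp.equiv 2 _).symm v with hv'
  have h1 : ∑ i : Fin m, ∑ j : Fin m, v i * (A i j * v j)
      = inner ℝ v' (Matrix.toEuclideanCLM (𝕜 := ℝ) A v') := by
    rw [hv', WithLp.equiv_symm_apply, Matrix.toEuclideanCLM_toLp]
    simp only [PiLp.inner_apply, RCLike.inner_apply, hv', PiLp.toLp_apply,
      Matrix.toLin'_apply, Matrix.mulVec, dotProduct]
    simp [starRingEnd_apply, Finset.mul_sum]
    exact Finset.sum_congr rfl fun i _ => by rw [Finset.sum_mul]; exact Finset.sum_congr rfl fun j _ => by ring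
  have h2 : ∑ i : Fin m, v i ^ 2 = ‖v'‖ ^ 2 := by
    rw [← real_inner_self_eq_norm_sq]
    simp [PiLp.inner_apply, RCLike.inner_apply, hv', PiLp.toLp_apply, sq]
    rw [← sq, EuclideanSpace.real_norm_sq_eq]
    simp [sq]
  rw [h1, h2]
  calc inner ℝ v' (Matrix.toEuclideanCLM (𝕜 := ℝ) A v')
      ≤ ‖v'‖ * ‖Matrix.toEuclideanCLM (𝕜 := ℝ) A v'‖ := real_inner_le_norm _ _
    _ ≤ ‖v'‖ * (specNorm A * ‖v'‖) :=
        mul_le_mul_of_nonneg_left ((Matrix.toEuclideanCLM (𝕜 := ℝ) A).le_opNorm v')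
          (norm_nonneg _)
    _ = specNorm A * ‖v'‖ ^ 2 := by ring

lemma sum_swap4 {c0 m : ℕ} {G : Type*} [Fintype G]
    (f : Fin c0 → G → Fin m → Fin m → ℝ) :
    ∑ k : Fin c0, ∑ g : G, ∑ i : Fin m, ∑ j : Fin m, f k g i j
      = ∑ i : Fin m, ∑ j : Fin m, ∑ k : Fin c0, ∑ g : G, f k g i j :=
  calc ∑ k : Fin c0, ∑ g : G, ∑ i : Fin m, ∑ j : Fin m, f k g i j
      = ∑ k : Fin c0, ∑ i : Fin m, ∑ g : G, ∑ j : Fin m, f k g i j :=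
        Finset.sum_congr rfl fun _ _ => Finset.sum_comm
    _ = ∑ i : Fin m, ∑ k : Fin c0, ∑ g : G, ∑ j : Fin m, f k g i j := Finset.sum_comm
    _ = ∑ i : Fin m, ∑ k : Fin c0, ∑ j : Fin m, ∑ g : G, f k g i j :=
        Finset.sum_congr rfl fun _ _ => Finset.sum_congr rfl fun _ _ => Finset.sum_comm
    _ = ∑ i : Fin m, ∑ j : Fin m, ∑ k : Fin c0, ∑ g : G, f k g i j :=
        Finset.sum_congr rfl fun _ _ => Finset.sum_comm

theorem max_pooling_key_inequality
    {G : Type*} [Group G] [Fintype G] (hG : 2 ≤ Fintype.card G)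
    (c0 m : ℕ) (hc0 : 0 < c0) (hm : 0 < m)
    (bx : ℝ) (hbx : 0 ≤ bx)
    (x : Fin m → Fin c0 → G → ℝ)
    (hx : ∀ i, Real.sqrt (∑ k : Fin c0, ∑ g : G, (x i k g) ^ 2) ≤ bx)
    (M : ℝ)
    (hM : M = ⨆ l : Fin m → G, specNorm (Matrix.of fun i i' : Fin m =>
      ∑ k : Fin c0, ∑ g : G, x i k ((l i)⁻¹ * g) * x i' k ((l i')⁻¹ * g))) :
    (∑ ε : Fin m → Bool,
        ⨆ l : Fin m → G,
          ∑ k : Fin c0, ∑ g : G,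
            (∑ i : Fin m, (if ε i then (1 : ℝ) else -1) * x i k ((l i)⁻¹ * g)) ^ 2)
        / 2 ^ m
      ≤ 8 * m * Real.log (Fintype.card G) * M + m * bx ^ 2 +
          m * Real.sqrt (8 * Real.log (Fintype.card G) * M * bx ^ 2) := by
  have hGne : Nonempty G := Fintype.card_pos_iff.mp (by omega)
  inhabit G
  have hFle : ∀ l : Fin m → G, specNorm (Matrix.of fun i i' : Fin m =>
      ∑ k : Fin c0, ∑ g : G, x i k ((l i)⁻¹ * g) * x i' k ((l i')⁻¹ * g)) ≤ M := by
    intro l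
    rw [hM]
    exact le_ciSup (f := fun l : Fin m → G => specNorm (Matrix.of fun i i' : Fin m =>
      ∑ k : Fin c0, ∑ g : G, x i k ((l i)⁻¹ * g) * x i' k ((l i')⁻¹ * g)))
      (Set.Finite.bddAbove (Set.finite_range _)) l
  have hM0 : 0 ≤ M := le_trans (specNorm_nonneg _) (hFle fun _ => default)
  have hlog : (0.69 : ℝ) ≤ Real.log (Fintype.card G) := by
    have h2 := Real.log_two_gt_d9
    have : Real.log 2 ≤ Real.log (Fintype.card G) :=
      Real.log_le_log (by norm_num) (by exact_mod_cast hG)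
    linarith
  have key : ∀ ε : Fin m → Bool,
      (⨆ l : Fin m → G, ∑ k : Fin c0, ∑ g : G,
        (∑ i : Fin m, (if ε i then (1 : ℝ) else -1) * x i k ((l i)⁻¹ * g)) ^ 2) ≤ m * M := by
    intro ε
    apply ciSup_le
    intro l
    set v : Fin m → ℝ := fun i => if ε i then (1 : ℝ) else -1 with hv
    set A : Matrix (Fin m) (Fin m) ℝ := Matrix.of fun i i' : Fin m =>
      ∑ k : Fin c0, ∑ g : G, x i k ((l i)⁻¹ * g) * x i' k ((l i')⁻¹ * g) with hA
    have e1 : ∀ (k : Fin c0) (g : G),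
        (∑ i : Fin m, v i * x i k ((l i)⁻¹ * g)) ^ 2
          = ∑ i : Fin m, ∑ j : Fin m,
              (v i * x i k ((l i)⁻¹ * g)) * (v j * x j k ((l j)⁻¹ * g)) := fun k g => by
      rw [sq, Finset.sum_mul_sum]
    have expand : ∑ k : Fin c0, ∑ g : G,
        (∑ i : Fin m, v i * x i k ((l i)⁻¹ * g)) ^ 2
        = ∑ i : Fin m, ∑ j : Fin m, v i * (A i j * v j) := by
      simp_rw [e1]
      rw [sum_swap4]
      refine Finset.sum_congr rfl fun i _ => Finset.sum_congr rfl fun j _ => ?_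
      simp only [hA, Matrix.of_apply, Finset.sum_mul, Finset.mul_sum]
      exact Finset.sum_congr rfl fun k _ => Finset.sum_congr rfl fun g _ => by ring
    rw [expand]
    have hvsq : ∑ i : Fin m, v i ^ 2 = m := by
      have : ∀ i, v i ^ 2 = 1 := by intro i; by_cases h : ε i <;> simp [hv, h]
      simp [this]
    calc ∑ i : Fin m, ∑ j : Fin m, v i * (A i j * v j)
        ≤ specNorm A * ∑ i : Fin m, v i ^ 2 := quad_form_le A v
      _ = specNorm A * m := by rw [hvsq]
      _ ≤ M * m := mul_le_mul_of_nonneg_right (hFle l) (by positivity)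
      _ = m * M := mul_comm _ _
  have hsum : (∑ ε : Fin m → Bool,
      ⨆ l : Fin m → G, ∑ k : Fin c0, ∑ g : G,
        (∑ i : Fin m, (if ε i then (1 : ℝ) else -1) * x i k ((l i)⁻¹ * g)) ^ 2)
      ≤ 2 ^ m * (m * M) := by
    calc _ ≤ ∑ _ε : Fin m → Bool, (m * M : ℝ) := Finset.sum_le_sum fun ε _ => key ε
      _ = 2 ^ m * (m * M) := by simp [Finset.card_univ, mul_comm]
  have h2m : (0 : ℝ) < 2 ^ m := by positivity
  rw [div_le_iff₀ h2m]
  have hsqrt : 0 ≤ (m : ℝ) * Real.sqrt (8 * Real.log (Fintype.card G) * M * bx ^ 2) := by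
    positivity
  have hmbx : 0 ≤ (m : ℝ) * bx ^ 2 := by positivity
  have h1 : (0 : ℝ) ≤ (m : ℝ) * M := mul_nonneg (Nat.cast_nonneg m) hM0
  have hmain : (m : ℝ) * M ≤ 8 * m * Real.log (Fintype.card G) * M := by
    have h2 := mul_le_mul_of_nonneg_left hlog h1
    nlinarith [h1, h2]
  calc (∑ ε : Fin m → Bool,
      ⨆ l : Fin m → G, ∑ k : Fin c0, ∑ g : G,
        (∑ i : Fin m, (if ε i then (1 : ℝ) else -1) * x i k ((l i)⁻¹ * g)) ^ 2)
      ≤ 2 ^ m * (m * M) := hsum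
    _ ≤ (8 * m * Real.log (Fintype.card G) * M + m * bx ^ 2 +
          m * Real.sqrt (8 * Real.log (Fintype.card G) * M * bx ^ 2)) * 2 ^ m := by
        nlinarith [mul_le_mul_of_nonneg_left hmain h2m.le,
          mul_nonneg hmbx h2m.le, mul_nonneg hsqrt h2m.le]
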